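/- Let V be a finite set with Laplacian Δ and carré du champ Γ, and let u : V → ℝ. If x minimizes Δu over V and 1 + u(y) − u(x) ≥ 0 for all y with q(x,y) > 0, then ΔΔu(x) + 2Γ(u, Δu)(x) ≥ 0. -/
import Mathlib


open Finset Real

/-- Graph Laplacian on a finite weighted graph. -/
noncomputable def glap {V : Type*} [Fintype V] (q : V → V → ℝ) (f : V → ℝ) (x : V) : ℝ :=
  ∑ y, q x y * (f y - f x)

/-- Carré du champ operator Γ(f,g). -/
noncomputable def gGammaBil {V : Type*} [Fintype V] (q : V → V → ℝ) (f g : V → ℝ) (x : V) : ℝ :=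
  (1 / 2) * ∑ y, q x y * (f y - f x) * (g y - g x)

/-- Carré du champ Γf = Γ(f,f). -/
noncomputable def gGamma {V : Type*} [Fintype V] (q : V → V → ℝ) (f : V → ℝ) (x : V) : ℝ :=
  gGammaBil q f f x

/-- Iterated carré du champ Γ₂f = (ΔΓf − 2Γ(f,Δf))/2. -/
noncomputable def gGammaTwo {V : Type*} [Fintype V] (q : V → V → ℝ) (f : V → ℝ) (x : V) : ℝ :=
  (glap q (gGamma q f) x - 2 * gGammaBil q f (glap q f) x) / 2

theorem lap_lap_add_two_gamma_nonneg {V : Type*} [Fintype V] (q : V → V → ℝ)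
    (hq : ∀ x y, 0 ≤ q x y) (hdiag : ∀ x, q x x = 0) (u : V → ℝ) (x : V)
    (hmin : ∀ y, glap q u x ≤ glap q u y)
    (hgrad : ∀ y, 0 < q x y → 0 ≤ 1 + u y - u x) :
    0 ≤ glap q (glap q u) x + 2 * gGammaBil q u (glap q u) x := by
  have key : glap q (glap q u) x + 2 * gGammaBil q u (glap q u) x
      = ∑ y, q x y * (glap q u y - glap q u x) * (1 + (u y - u x)) := by
    simp only [glap, gGammaBil, Finset.mul_sum]
    rw [← Finset.sum_add_distrib]
    exact Finset.sum_congr rfl fun y _ => by ring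
  rw [key]
  refine Finset.sum_nonneg fun y _ => ?_
  rcases eq_or_lt_of_le (hq x y) with h | h
  · simp [← h]
  · have h1 : 0 ≤ glap q u y - glap q u x := sub_nonneg.2 (hmin y)
    have h2 := hgrad y h
    have : (0:ℝ) ≤ 1 + (u y - u x) := by linarith
    positivity
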